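/- If a finite collection of ℓ lines in the real plane is in general position apart from prescribed multiplicities, and there exists an intersection point of multiplicity ℓ - c, then Σ_k n_k · C(k-1, 2) ≤ C(c,2) + C(ℓ-c,2), where n_k is the number of intersection points of multiplicity k. -/

import Mathlib

open scoped Classical

/-- A line in the real plane. -/
def IsLine (l : Set (ℝ × ℝ)) : Prop :=
  ∃ a b c : ℝ, (a, b) ≠ (0, 0) ∧ l = {p : ℝ × ℝ | a * p.1 + b * p.2 = c}

/-- The multiplicity of a point with respect to a finite collection of lines. -/
noncomputable def multiplicity' (L : Finset (Set (ℝ × ℝ))) (p : ℝ × ℝ) : ℕ :=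
  (L.filter fun l => p ∈ l).card

lemma cross_zero {a b u1 u2 v1 v2 : ℝ} (hab : (a, b) ≠ (0, 0))
    (hu : a * u1 + b * u2 = 0) (hv : a * v1 + b * v2 = 0) :
    u1 * v2 - u2 * v1 = 0 := by
  have hab' : a ≠ 0 ∨ b ≠ 0 := by
    by_contra h; push_neg at h; exact hab (by simp [h.1, h.2, Prod.ext_iff])
  rcases hab' with ha | hb
  · have h : a * (u1 * v2 - u2 * v1) = 0 := by linear_combination v2 * hu - u2 * hv
    exact (mul_eq_zero.1 h).resolve_left ha
  · have h : b * (u1 * v2 - u2 * v1) = 0 := by linear_combination u1 * hv - v1 * hu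
    exact (mul_eq_zero.1 h).resolve_left hb

lemma line_unique {l l' : Set (ℝ × ℝ)} (hl : IsLine l) (hl' : IsLine l')
    {p q : ℝ × ℝ} (hpq : p ≠ q) (hpl : p ∈ l) (hql : q ∈ l)
    (hpl' : p ∈ l') (hql' : q ∈ l') : l = l' := by
  obtain ⟨a, b, c, hab, rfl⟩ := hl
  obtain ⟨a', b', c', hab', rfl⟩ := hl'
  have key : ∀ (a b c a' b' c' : ℝ), (a, b) ≠ (0,0) →
      a * p.1 + b * p.2 = c → a * q.1 + b * q.2 = c →
      a' * p.1 + b' * p.2 = c' → a' * q.1 + b' * q.2 = c' →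
      ∀ x : ℝ × ℝ, a * x.1 + b * x.2 = c → a' * x.1 + b' * x.2 = c' := by
    intro a b c a' b' c' hab hp hq hp' hq' x hx
    have hu : a * (x.1 - p.1) + b * (x.2 - p.2) = 0 := by linarith
    have hv : a * (q.1 - p.1) + b * (q.2 - p.2) = 0 := by linarith
    have hcross := cross_zero hab hu hv
    have hvne : q.1 - p.1 ≠ 0 ∨ q.2 - p.2 ≠ 0 := by
      by_contra h
      push_neg at h
      exact hpq (Prod.ext (by linarith [h.1]) (by linarith [h.2]))
    rcases hvne with h1 | h2
    · have h : (q.1 - p.1) * (a' * x.1 + b' * x.2 - c') = 0 := by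
        linear_combination (q.1 - p.1) * hp' + (x.1 - p.1) * (hq' - hp') - b' * hcross
      have := (mul_eq_zero.1 h).resolve_left h1
      linarith
    · have h : (q.2 - p.2) * (a' * x.1 + b' * x.2 - c') = 0 := by
        linear_combination (q.2 - p.2) * hp' + (x.2 - p.2) * (hq' - hp') + a' * hcross
      have := (mul_eq_zero.1 h).resolve_left h2
      linarith
  ext x
  constructor
  · exact fun hx => key a b c a' b' c' hab hpl hql hpl' hql' x hx
  · exact fun hx => key a' b' c' a b c hab' hpl' hql' hpl hql x hx

/-- For an arrangement of `ℓ` real lines with an intersection point `P`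
of multiplicity `ℓ - c`, one has `Σ_k n_k · C(k-1, 2) ≤ C(c,2) + C(ℓ-c,2)`, where
`n_k` is the number of intersection points of multiplicity `k`. -/
theorem largepoint (L : Finset (Set (ℝ × ℝ))) (hL : ∀ l ∈ L, IsLine l)
    (ℓ c : ℕ) (hcard : L.card = ℓ) (hc : c ≤ ℓ)
    (P : ℝ × ℝ) (hP : multiplicity' L P = ℓ - c)
    (Pts : Finset (ℝ × ℝ))
    (hPts : ∀ p, p ∈ Pts ↔ 2 ≤ multiplicity' L p) :
    ∑ k ∈ Finset.Icc 2 ℓ,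
        (Pts.filter fun p => multiplicity' L p = k).card * Nat.choose (k - 1) 2
      ≤ Nat.choose c 2 + Nat.choose (ℓ - c) 2 := by
  classical
  set B : Finset (Set (ℝ × ℝ)) := L.filter (fun l => P ∉ l) with hBdef
  have hB : B.card = c := by
    have h1 := Finset.card_filter_add_card_filter_not (s := L)
      (p := fun l => P ∈ l)
    have : (ℓ - c) + B.card = ℓ := by
      rw [hBdef]
      simpa [multiplicity' ] using (hP ▸ hcard ▸ h1)
    omega
  -- Step 1: rewrite the sum pointwise
  have hmult_mem : ∀ p ∈ Pts, multiplicity' L p ∈ Finset.Icc 2 ℓ := by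
    intro p hp
    rw [Finset.mem_Icc]
    exact ⟨(hPts p).1 hp, hcard ▸ Finset.card_filter_le _ _⟩
  have hsum : ∑ k ∈ Finset.Icc 2 ℓ,
      (Pts.filter fun p => multiplicity' L p = k).card * Nat.choose (k - 1) 2
      = ∑ p ∈ Pts, Nat.choose (multiplicity' L p - 1) 2 := by
    rw [← Finset.sum_fiberwise_of_maps_to hmult_mem
      (fun p => Nat.choose (multiplicity' L p - 1) 2)]
    apply Finset.sum_congr rfl
    intro k _
    have hcg : ∀ p ∈ Pts.filter (fun p => multiplicity' L p = k),
        Nat.choose (multiplicity' L p - 1) 2 = Nat.choose (k - 1) 2 :=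
      fun p hp => by rw [(Finset.mem_filter.1 hp).2]
    rw [Finset.sum_congr rfl hcg, Finset.sum_const, smul_eq_mul]
  rw [hsum]
  -- Step 2: split off P
  have hsplit : ∑ p ∈ Pts, Nat.choose (multiplicity' L p - 1) 2
      ≤ Nat.choose (multiplicity' L P - 1) 2
        + ∑ p ∈ Pts.erase P, Nat.choose (multiplicity' L p - 1) 2 := by
    by_cases hPin : P ∈ Pts
    · exact (Finset.add_sum_erase Pts _ hPin).ge
    · rw [Finset.erase_eq_of_notMem hPin]
      exact Nat.le_add_left _ _
  have hPterm : Nat.choose (multiplicity' L P - 1) 2 ≤ Nat.choose (ℓ - c) 2 := by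
    rw [hP]; exact Nat.choose_le_choose 2 (Nat.sub_le _ _)
  -- Step 3: bound the erased sum by C(c,2)
  set T : (ℝ × ℝ) → Finset (Finset (Set (ℝ × ℝ))) :=
    fun p => Finset.powersetCard 2 (B.filter (fun l => p ∈ l)) with hTdef
  have hterm : ∀ p ∈ Pts.erase P,
      Nat.choose (multiplicity' L p - 1) 2 ≤ (T p).card := by
    intro p hp
    have hpP : p ≠ P := Finset.ne_of_mem_erase hp
    have hAcard : ((L.filter (fun l => p ∈ l)).filter (fun l => P ∈ l)).card ≤ 1 := by
      apply Finset.card_le_one.2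
      intro l₁ h₁ l₂ h₂
      simp only [Finset.mem_filter] at h₁ h₂
      exact line_unique (hL l₁ h₁.1.1) (hL l₂ h₂.1.1) hpP h₁.1.2 h₁.2 h₂.1.2 h₂.2
    have hsplit2 : multiplicity' L p
        = ((L.filter (fun l => p ∈ l)).filter (fun l => P ∈ l)).card
          + ((L.filter (fun l => p ∈ l)).filter (fun l => P ∉ l)).card := by
      rw [multiplicity']
      exact (Finset.card_filter_add_card_filter_not (p := fun l => P ∈ l)).symm
    have hBfil : (L.filter (fun l => p ∈ l)).filter (fun l => P ∉ l)
        = B.filter (fun l => p ∈ l) := by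
      rw [hBdef, Finset.filter_filter, Finset.filter_filter]
      exact Finset.filter_congr (fun l _ => by tauto)
    have hle : multiplicity' L p - 1 ≤ (B.filter (fun l => p ∈ l)).card := by
      rw [hsplit2, hBfil] at *
      omega
    calc Nat.choose (multiplicity' L p - 1) 2
        ≤ Nat.choose (B.filter (fun l => p ∈ l)).card 2 := Nat.choose_le_choose 2 hle
      _ = (T p).card := by rw [hTdef, Finset.card_powersetCard]
  have hdisj : ∀ p ∈ Pts.erase P, ∀ q ∈ Pts.erase P, p ≠ q → Disjoint (T p) (T q) := by
    intro p _ q _ hpq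
    rw [Finset.disjoint_left]
    intro s hsp hsq
    rw [hTdef, Finset.mem_powersetCard] at hsp hsq
    obtain ⟨l₁, hl₁, l₂, hl₂, hne⟩ := Finset.one_lt_card.1 (by omega : 1 < s.card)
    have h₁p := Finset.mem_filter.1 (hsp.1 hl₁)
    have h₂p := Finset.mem_filter.1 (hsp.1 hl₂)
    have h₁q := Finset.mem_filter.1 (hsq.1 hl₁)
    have h₂q := Finset.mem_filter.1 (hsq.1 hl₂)
    have hl₁L : l₁ ∈ L := Finset.mem_of_mem_filter _ h₁p.1
    have hl₂L : l₂ ∈ L := Finset.mem_of_mem_filter _ h₂p.1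
    exact hne (line_unique (hL l₁ hl₁L) (hL l₂ hl₂L) hpq h₁p.2 h₁q.2 h₂p.2 h₂q.2)
  have hbiU : ∑ p ∈ Pts.erase P, (T p).card ≤ Nat.choose c 2 := by
    rw [← Finset.card_biUnion hdisj]
    calc ((Pts.erase P).biUnion T).card
        ≤ (Finset.powersetCard 2 B).card := by
          apply Finset.card_le_card
          apply Finset.biUnion_subset.2
          intro p _
          exact Finset.powersetCard_mono (Finset.filter_subset _ _)
      _ = Nat.choose c 2 := by rw [Finset.card_powersetCard, hB]
  calc ∑ p ∈ Pts, Nat.choose (multiplicity' L p - 1) 2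
      ≤ Nat.choose (multiplicity' L P - 1) 2
        + ∑ p ∈ Pts.erase P, Nat.choose (multiplicity' L p - 1) 2 := hsplit
    _ ≤ Nat.choose (ℓ - c) 2 + ∑ p ∈ Pts.erase P, (T p).card :=
        Nat.add_le_add hPterm (Finset.sum_le_sum hterm)
    _ ≤ Nat.choose (ℓ - c) 2 + Nat.choose c 2 := Nat.add_le_add_left hbiU _
    _ = Nat.choose c 2 + Nat.choose (ℓ - c) 2 := Nat.add_comm _ _
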